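/- Let F be an infinite field, X = (X₁, …, X_k) a tuple of pairwise disjoint sets of variables, n ≥ 1, and f ∈ F⟨X₁⟩ ⊗_F ⋯ ⊗_F F⟨X_k⟩. If for every valuation v = (v₁, …, v_k) with vᵢ : Xᵢ → Mₙ(F) the induced homomorphism ṽ = ṽ₁ ⊗ ⋯ ⊗ ṽ_k sends f to 0 in Mₙ(F) ⊗_F ⋯ ⊗_F Mₙ(F), then Φₙ(f) = (Φₙ^{X₁} ⊗ ⋯ ⊗ Φₙ^{X_k})(f) = 0. -/

import Mathlib

open scoped TensorProduct PiTensorProduct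

set_option synthInstance.maxHeartbeats 1000000
set_option maxHeartbeats 1000000

/-- The `F`-algebra homomorphism `Φₙ^X : F⟨X⟩ → Mₙ(F[t])` sending each variable
`x ∈ X` to its generic matrix `(t^{(x)}_{ij})`.  The generic matrix algebra
`Fₙ⟨X⟩` is its range. -/
noncomputable def genericMatrixHom (F : Type*) [Field F] (X : Type*) (n : ℕ) :
    FreeAlgebra F X →ₐ[F] Matrix (Fin n) (Fin n) (MvPolynomial (X × Fin n × Fin n) F) :=
  FreeAlgebra.lift F fun x => Matrix.of fun i j => MvPolynomial.X (x, i, j)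

namespace GenericMatrixAux

open MvPolynomial PiTensorProduct

/-- Entry of a matrix, as a linear map. -/
def entryLM (F : Type*) {M : Type*} [Semiring F] [AddCommMonoid M] [Module F M]
    {m' n' : Type*} (a : m') (c : n') : Matrix m' n' M →ₗ[F] M where
  toFun A := A a c
  map_add' _ _ := rfl
  map_smul' _ _ := rfl

variable {k : ℕ} {X : Fin k → Type*} {n : ℕ}

/-- Index type for the basis of `Mₙ(F[t^{(x)}_{ab}])`. -/
abbrev κ (X : Fin k → Type*) (n : ℕ) (i : Fin k) :=
  (Fin n × Fin n) × ((X i × Fin n × Fin n) →₀ ℕ)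

/-- Combine a family of exponent vectors into one on the sigma type. -/
noncomputable def comb (d : Π i, (X i × Fin n × Fin n) →₀ ℕ) :
    (Σ i, X i × Fin n × Fin n) →₀ ℕ :=
  ∑ i, (d i).mapDomain (Sigma.mk i)

lemma comb_apply (d : Π i, (X i × Fin n × Fin n) →₀ ℕ) (i : Fin k) (s : X i × Fin n × Fin n) :
    comb d ⟨i, s⟩ = d i s := by
  classical
  rw [comb, Finsupp.finset_sum_apply, Finset.sum_eq_single i]
  · exact Finsupp.mapDomain_apply sigma_mk_injective _ _
  · intro j _ hj
    refine Finsupp.mapDomain_notin_range _ _ ?_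
    rintro ⟨t, ht⟩
    exact hj (congrArg Sigma.fst ht)
  · intro h; exact absurd (Finset.mem_univ i) h

lemma comb_injective : Function.Injective (comb (X := X) (n := n)) := by
  intro d d' h
  funext i
  ext s
  rw [← comb_apply d i s, h, comb_apply]

variable (F : Type*) [Field F]

/-- Basis vectors of `Mₙ(F[t])`. -/
noncomputable def bmat (i : Fin k) (j : κ X n i) :
    Matrix (Fin n) (Fin n) (MvPolynomial (X i × Fin n × Fin n) F) :=
  Matrix.single j.1.1 j.1.2 (monomial j.2 1)

/-- Pure tensors of basis vectors. -/
noncomputable def Bt (c : Π i, κ X n i) :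
    ⨂[F] i, Matrix (Fin n) (Fin n) (MvPolynomial (X i × Fin n × Fin n) F) :=
  tprod F fun i => bmat F i (c i)

/-- The "entry extraction" linear map on the tensor product of generic matrix algebras. -/
noncomputable def Lmap (ab : Π _ : Fin k, Fin n × Fin n) :
    (⨂[F] i, Matrix (Fin n) (Fin n) (MvPolynomial (X i × Fin n × Fin n) F)) →ₗ[F]
      MvPolynomial (Σ i, X i × Fin n × Fin n) F :=
  PiTensorProduct.lift ((MultilinearMap.mkPiAlgebra F (Fin k)
      (MvPolynomial (Σ i, X i × Fin n × Fin n) F)).compLinearMap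
    (fun i => (rename (Sigma.mk i)).toLinearMap ∘ₗ entryLM F (ab i).1 (ab i).2))

lemma Lmap_tprod (ab : Π _ : Fin k, Fin n × Fin n)
    (m : Π i, Matrix (Fin n) (Fin n) (MvPolynomial (X i × Fin n × Fin n) F)) :
    Lmap F ab (tprod F m) = ∏ i, rename (Sigma.mk i) (m i (ab i).1 (ab i).2) := by
  simp [Lmap, entryLM]
  rfl

/-- The "entry extraction" linear map on the tensor product of matrix algebras. -/
noncomputable def L'map (ab : Π _ : Fin k, Fin n × Fin n) :
    (⨂[F] _ : Fin k, Matrix (Fin n) (Fin n) F) →ₗ[F] F :=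
  PiTensorProduct.lift ((MultilinearMap.mkPiAlgebra F (Fin k) F).compLinearMap
    (fun i => entryLM F (ab i).1 (ab i).2))

lemma L'map_tprod (ab : Π _ : Fin k, Fin n × Fin n)
    (m : Π _ : Fin k, Matrix (Fin n) (Fin n) F) :
    L'map F ab (tprod F m) = ∏ i, m i (ab i).1 (ab i).2 := by
  simp [L'map, entryLM]
  rfl

end GenericMatrixAux

namespace GenericMatrixAux
open MvPolynomial PiTensorProduct

attribute [local instance] Classical.propDecidable

variable {k : ℕ} {X : Fin k → Type*} {n : ℕ} (F : Type*) [Field F]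

lemma bmat_apply (i : Fin k) (j : κ X n i) (a c : Fin n) :
    bmat F i j a c = if j.1.1 = a ∧ j.1.2 = c then monomial j.2 (1 : F) else 0 := rfl

lemma matrix_eq_sum (i : Fin k)
    (m : Matrix (Fin n) (Fin n) (MvPolynomial (X i × Fin n × Fin n) F)) :
    m = ∑ j ∈ (Finset.univ ×ˢ ((Finset.univ : Finset (Fin n × Fin n)).biUnion
          (fun ac => (m ac.1 ac.2).support))),
        (coeff j.2 (m j.1.1 j.1.2)) • bmat F i j := by
  classical
  set D := (Finset.univ : Finset (Fin n × Fin n)).biUnion (fun ac => (m ac.1 ac.2).support) with hD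
  ext a c : 1
  symm
  rw [Matrix.sum_apply, Finset.sum_product]
  rw [Finset.sum_eq_single (a, c)]
  · have hsub : (m a c).support ⊆ D := by
      intro d hd
      exact Finset.mem_biUnion.2 ⟨(a, c), Finset.mem_univ _, hd⟩
    calc ∑ d ∈ D, (coeff d (m a c) • bmat F i ((a, c), d)) a c
        = ∑ d ∈ D, monomial d (coeff d (m a c)) := by
          refine Finset.sum_congr rfl fun d _ => ?_
          rw [Matrix.smul_apply, bmat_apply, if_pos ⟨rfl, rfl⟩, smul_monomial, smul_eq_mul,
            mul_one]
      _ = m a c := by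
          rw [← Finset.sum_subset hsub (fun d _ hd => by
            rw [MvPolynomial.notMem_support_iff.1 hd, monomial_zero]), ← as_sum]
  · intro ac _ hac
    refine Finset.sum_eq_zero fun d _ => ?_
    rw [Matrix.smul_apply, bmat_apply, if_neg, smul_zero]
    rintro ⟨h1, h2⟩
    exact hac (Prod.ext h1 h2)
  · intro h; exact absurd (Finset.mem_univ _) h

lemma mem_span_Bt (g : ⨂[F] i, Matrix (Fin n) (Fin n) (MvPolynomial (X i × Fin n × Fin n) F)) :
    g ∈ Submodule.span F (Set.range (Bt F (X := X) (n := n))) := by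
  classical
  induction g using PiTensorProduct.induction_on with
  | smul_tprod r m =>
    refine Submodule.smul_mem _ r ?_
    have h0 : (PiTensorProduct.tprod F) m = (PiTensorProduct.tprod F)
        (fun i => ∑ j ∈ (Finset.univ ×ˢ ((Finset.univ : Finset (Fin n × Fin n)).biUnion
          (fun ac => (m i ac.1 ac.2).support))),
          (coeff j.2 (m i j.1.1 j.1.2)) • bmat F i j) := by
      congr 1; funext i; exact matrix_eq_sum F i (m i)
    rw [h0, MultilinearMap.map_sum_finset]
    refine Submodule.sum_mem _ fun c _ => ?_
    have h2 : (PiTensorProduct.tprod F)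
        (fun i => coeff (c i).2 (m i (c i).1.1 (c i).1.2) • bmat F i (c i))
        = (∏ i, coeff (c i).2 (m i (c i).1.1 (c i).1.2)) • Bt F c :=
      MultilinearMap.map_smul_univ _ _ _
    rw [h2]
    exact Submodule.smul_mem _ _ (Submodule.subset_span ⟨c, rfl⟩)
  | add x y hx hy => exact Submodule.add_mem _ hx hy

end GenericMatrixAux

namespace GenericMatrixAux
open MvPolynomial PiTensorProduct

attribute [local instance] Classical.propDecidable

variable {k : ℕ} {X : Fin k → Type*} {n : ℕ} (F : Type*) [Field F]

lemma prod_monomial_one {σ' ι' : Type*} (s : Finset ι') (e : ι' → (σ' →₀ ℕ)) :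
    (∏ i ∈ s, (monomial (e i) (1 : F))) = monomial (∑ i ∈ s, e i) 1 := by
  classical
  induction s using Finset.cons_induction with
  | empty => simp [monomial_zero']
  | cons a s ha ih => rw [Finset.prod_cons, Finset.sum_cons, ih, monomial_mul, one_mul]

lemma Lmap_Bt_match (ab : Π _ : Fin k, Fin n × Fin n) (c : Π i, κ X n i)
    (h : ∀ i, (c i).1 = ab i) :
    Lmap F ab (Bt F c) = monomial (comb fun i => (c i).2) (1 : F) := by
  rw [Bt, Lmap_tprod]
  have h1 : ∀ i, rename (Sigma.mk i) ((bmat F i (c i)) (ab i).1 (ab i).2)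
      = monomial (((c i).2).mapDomain
          (Sigma.mk (β := fun j => X j × Fin n × Fin n) i)) (1 : F) := by
    intro i
    rw [bmat_apply, if_pos ⟨congrArg Prod.fst (h i), congrArg Prod.snd (h i)⟩, rename_monomial]
  simp only [h1]
  rw [prod_monomial_one F Finset.univ (fun i => ((c i).2).mapDomain (Sigma.mk i))]
  rfl

lemma Lmap_Bt_nomatch (ab : Π _ : Fin k, Fin n × Fin n) (c : Π i, κ X n i)
    (h : ¬ ∀ i, (c i).1 = ab i) :
    Lmap F ab (Bt F c) = 0 := by
  push_neg at h
  obtain ⟨i, hi⟩ := h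
  rw [Bt, Lmap_tprod]
  refine Finset.prod_eq_zero (Finset.mem_univ i) ?_
  rw [bmat_apply, if_neg, map_zero]
  rintro ⟨h1, h2⟩
  exact hi (Prod.ext h1 h2)

lemma aeval_Lmap (ab : Π _ : Fin k, Fin n × Fin n)
    (p' : (Σ i, X i × Fin n × Fin n) → F)
    (g : ⨂[F] i, Matrix (Fin n) (Fin n) (MvPolynomial (X i × Fin n × Fin n) F)) :
    aeval p' (Lmap F ab g)
      = L'map F ab (PiTensorProduct.map (fun i =>
          (AlgHom.mapMatrix (aeval (fun s => p' ⟨i, s⟩)) :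
            Matrix (Fin n) (Fin n) (MvPolynomial (X i × Fin n × Fin n) F) →ₐ[F]
              Matrix (Fin n) (Fin n) F).toLinearMap) g) := by
  induction g using PiTensorProduct.induction_on with
  | smul_tprod r m =>
    rw [map_smul, map_smul, map_smul, map_smul, Lmap_tprod, PiTensorProduct.map_tprod,
      L'map_tprod, map_prod]
    congr 1
    refine Finset.prod_congr rfl fun i _ => ?_
    rw [aeval_rename, AlgHom.toLinearMap_apply, AlgHom.mapMatrix_apply, Matrix.map_apply]
    rfl
  | add x y hx hy =>
    rw [map_add, map_add, map_add, map_add, hx, hy]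

variable [Infinite F]

lemma tensor_eq_zero_of_eval
    (g : ⨂[F] i, Matrix (Fin n) (Fin n) (MvPolynomial (X i × Fin n × Fin n) F))
    (hg : ∀ p : Π i, (X i × Fin n × Fin n) → F,
      PiTensorProduct.map (fun i =>
        (AlgHom.mapMatrix (aeval (p i)) :
          Matrix (Fin n) (Fin n) (MvPolynomial (X i × Fin n × Fin n) F) →ₐ[F]
            Matrix (Fin n) (Fin n) F).toLinearMap) g = 0) :
    g = 0 := by
  obtain ⟨r, hr⟩ := Finsupp.mem_span_range_iff_exists_finsupp.1 (mem_span_Bt F g)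
  have hL : ∀ ab, Lmap F ab g = 0 := by
    intro ab
    apply MvPolynomial.funext
    intro p'
    have h1 := aeval_Lmap F ab p' g
    rw [hg (fun i s => p' ⟨i, s⟩), map_zero] at h1
    rw [map_zero]
    calc eval p' (Lmap F ab g) = aeval p' (Lmap F ab g) := by rw [← coe_aeval_eq_eval]; rfl
      _ = 0 := h1
  have hr0 : ∀ c₀, r c₀ = 0 := by
    intro c₀
    by_cases hc₀ : c₀ ∈ r.support
    swap
    · exact Finsupp.notMem_support_iff.1 hc₀
    set ab := fun i => (c₀ i).1 with hab
    set u₀ := comb fun i => (c₀ i).2 with hu₀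
    set ℓ : (⨂[F] i, Matrix (Fin n) (Fin n) (MvPolynomial (X i × Fin n × Fin n) F)) →ₗ[F] F :=
      (lcoeff F u₀).comp (Lmap F ab) with hℓ
    have hℓg : ℓ g = 0 := by rw [hℓ, LinearMap.comp_apply, hL ab, map_zero]
    have hexp : ℓ g = ∑ c ∈ r.support, r c • ℓ (Bt F c) := by
      rw [← hr, map_finsuppSum]
      refine Finset.sum_congr rfl fun c _ => ?_
      exact map_smul ℓ _ _
    have hBc₀ : ℓ (Bt F c₀) = 1 := by
      rw [hℓ, LinearMap.comp_apply, Lmap_Bt_match F ab c₀ (fun i => rfl), lcoeff_apply,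
        coeff_monomial, if_pos rfl]
    have hother : ∀ c ∈ r.support, c ≠ c₀ → r c • ℓ (Bt F c) = 0 := by
      intro c _ hne
      by_cases hcab : ∀ i, (c i).1 = ab i
      · have hd : comb (fun i => (c i).2) ≠ u₀ := by
          intro hcomb
          apply hne
          have hd2 := comb_injective hcomb
          funext i
          exact Prod.ext (hcab i) (congrFun hd2 i)
        rw [hℓ, LinearMap.comp_apply, Lmap_Bt_match F ab c hcab, lcoeff_apply,
          coeff_monomial, if_neg hd, smul_zero]
      · rw [hℓ, LinearMap.comp_apply, Lmap_Bt_nomatch F ab c hcab, map_zero, smul_zero]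
    have := hexp.symm.trans hℓg
    rw [Finset.sum_eq_single c₀ hother (fun h => absurd hc₀ h)] at this
    rw [hBc₀, smul_eq_mul, mul_one] at this
    exact this
  have hrz : r = 0 := Finsupp.ext hr0
  rw [← hr, hrz, Finsupp.sum_zero_index]

end GenericMatrixAux

/-- If `f ∈ F⟨X₁⟩ ⊗_F ⋯ ⊗_F F⟨X_k⟩` (with `F` an infinite field) is sent to `0`
in `Mₙ(F) ⊗_F ⋯ ⊗_F Mₙ(F)` by the homomorphism `ṽ = ṽ₁ ⊗ ⋯ ⊗ ṽ_k` induced by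
every valuation `v = (v₁, …, v_k)` with `vᵢ : Xᵢ → Mₙ(F)`, then
`Φₙ(f) = (Φₙ^{X₁} ⊗ ⋯ ⊗ Φₙ^{X_k})(f) = 0` in `Fₙ⟨X₁⟩ ⊗_F ⋯ ⊗_F Fₙ⟨X_k⟩`. -/
theorem genericMatrixHom_tensor_eq_zero_of_forall_valuation_eq_zero
    (F : Type*) [Field F] [Infinite F] (k : ℕ) (X : Fin k → Type*) (n : ℕ) (hn : 1 ≤ n)
    (f : ⨂[F] i, FreeAlgebra F (X i))
    (hval : ∀ v : Π i, X i → Matrix (Fin n) (Fin n) F,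
      PiTensorProduct.map (fun i => (FreeAlgebra.lift F (v i)).toLinearMap) f = 0) :
    PiTensorProduct.map
      (fun i => (genericMatrixHom F (X i) n).rangeRestrict.toLinearMap) f = 0 := by
  classical
  have hgz : PiTensorProduct.map
      (fun i => (genericMatrixHom F (X i) n).toLinearMap) f = 0 := by
    apply GenericMatrixAux.tensor_eq_zero_of_eval F
    intro p
    have hcomp : ∀ i, (AlgHom.mapMatrix (MvPolynomial.aeval (p i)) :
        Matrix (Fin n) (Fin n) (MvPolynomial (X i × Fin n × Fin n) F) →ₐ[F]
          Matrix (Fin n) (Fin n) F).comp (genericMatrixHom F (X i) n)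
        = FreeAlgebra.lift F (fun x => Matrix.of fun a b => p i (x, a, b)) := by
      intro i
      apply FreeAlgebra.hom_ext
      funext x
      show (AlgHom.mapMatrix (MvPolynomial.aeval (p i)))
          ((genericMatrixHom F (X i) n) (FreeAlgebra.ι F x)) = _
      simp only [genericMatrixHom, FreeAlgebra.lift_ι_apply]
      ext a b
      simp [AlgHom.mapMatrix_apply, Matrix.map_apply]
    have h2 : PiTensorProduct.map (fun i =>
        (AlgHom.mapMatrix (MvPolynomial.aeval (p i)) :
          Matrix (Fin n) (Fin n) (MvPolynomial (X i × Fin n × Fin n) F) →ₐ[F]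
            Matrix (Fin n) (Fin n) F).toLinearMap)
        (PiTensorProduct.map (fun i => (genericMatrixHom F (X i) n).toLinearMap) f)
        = PiTensorProduct.map (fun i =>
            (FreeAlgebra.lift F (fun x => Matrix.of fun a b => p i (x, a, b))).toLinearMap) f := by
      have hfam : (fun i => (AlgHom.mapMatrix (MvPolynomial.aeval (p i)) :
          Matrix (Fin n) (Fin n) (MvPolynomial (X i × Fin n × Fin n) F) →ₐ[F]
            Matrix (Fin n) (Fin n) F).toLinearMap ∘ₗ (genericMatrixHom F (X i) n).toLinearMap)
          = fun i => (FreeAlgebra.lift F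
              (fun x => Matrix.of fun a b => p i (x, a, b))).toLinearMap :=
        funext fun i => by rw [← AlgHom.comp_toLinearMap, hcomp i]
      rw [← LinearMap.comp_apply, ← PiTensorProduct.map_comp, hfam]
    rw [h2]
    exact hval _
  have hvalinj : ∀ i, LinearMap.ker
      ((Subalgebra.val (genericMatrixHom F (X i) n).range).toLinearMap) = ⊥ := by
    intro i
    rw [LinearMap.ker_eq_bot]
    exact fun a b h => Subtype.ext h
  choose ℓ hℓ using fun i => LinearMap.exists_leftInverse_of_injective _ (hvalinj i)
  have hcompLM : (fun i => (Subalgebra.val (genericMatrixHom F (X i) n).range).toLinearMap ∘ₗ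
      (genericMatrixHom F (X i) n).rangeRestrict.toLinearMap)
      = fun i => (genericMatrixHom F (X i) n).toLinearMap :=
    funext fun i => LinearMap.ext fun y => rfl
  have h1 : PiTensorProduct.map
      (fun i => (Subalgebra.val (genericMatrixHom F (X i) n).range).toLinearMap)
      (PiTensorProduct.map
        (fun i => (genericMatrixHom F (X i) n).rangeRestrict.toLinearMap) f) = 0 := by
    rw [← LinearMap.comp_apply, ← PiTensorProduct.map_comp, hcompLM]
    exact hgz
  have h3 := congrArg (PiTensorProduct.map ℓ) h1
  rw [map_zero, ← LinearMap.comp_apply, ← PiTensorProduct.map_comp] at h3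
  have h4 : (fun i => ℓ i ∘ₗ
      (Subalgebra.val (genericMatrixHom F (X i) n).range).toLinearMap)
      = fun i => LinearMap.id := funext fun i => hℓ i
  rw [h4, PiTensorProduct.map_id, LinearMap.id_apply] at h3
  exact h3
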